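/- arXiv:2010.14661 — 2 statements merged into one kernel-verified Lean document; each statement's English description precedes it below -/
import Mathlib

section
/- Let G ~ G(n, p_n) with p_n = n^{-α} for a fixed 0 < α < 1. Then with probability tending to 1 as n → ∞, for every vertex v ∈ V, v is the unique vertex in N₁(v) adjacent to all other vertices of N₁(v). -/
open MeasureTheory ProbabilityTheory
open scoped ENNReal

/-- The Erdős–Rényi measure `G(n, p)`: each potential edge (unordered pair of vertices)
is present independently with probability `p`. -/
noncomputable def erMeasure (n : ℕ) (p : ℝ≥0∞) : Measure (Sym2 (Fin n) → Bool) :=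
  Measure.pi fun _ => (PMF.bernoulli (min p 1).toNNReal
    (by simpa using ENNReal.toNNReal_mono ENNReal.one_ne_top (min_le_right p 1))).toMeasure

/-- The simple graph determined by an edge-indicator configuration `ω`. -/
def graphOf (n : ℕ) (ω : Sym2 (Fin n) → Bool) : SimpleGraph (Fin n) where
  Adj x y := x ≠ y ∧ ω s(x, y) = true
  symm := by
    constructor
    intro x y h
    exact ⟨h.1.symm, by rw [Sym2.eq_swap]; exact h.2⟩
  loopless := by constructor; intro x h; exact h.1 rfl

instance (n : ℕ) (ω : Sym2 (Fin n) → Bool) : DecidableRel (graphOf n ω).Adj :=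
  fun x y => inferInstanceAs (Decidable (x ≠ y ∧ ω s(x, y) = true))

/-- The vertex set of the 1-neighborhood of `v`: `v` together with its neighbors. -/
def ball1 (n : ℕ) (ω : Sym2 (Fin n) → Bool) (v : Fin n) : Set (Fin n) :=
  insert v {w : Fin n | (graphOf n ω).Adj v w}

namespace FC

noncomputable def nu (p : ℝ≥0∞) : Measure Bool :=
  (PMF.bernoulli (min p 1).toNNReal
    (by simpa using ENNReal.toNNReal_mono ENNReal.one_ne_top (min_le_right p 1))).toMeasure

instance (p : ℝ≥0∞) : IsProbabilityMeasure (nu p) := PMF.toMeasure.isProbabilityMeasure _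

instance (n : ℕ) (p : ℝ≥0∞) : IsProbabilityMeasure (erMeasure n p) := by
  unfold erMeasure; infer_instance

lemma erMeasure_eq (n : ℕ) (p : ℝ≥0∞) :
    erMeasure n p = Measure.pi (fun _ : Sym2 (Fin n) => nu p) := rfl

lemma nu_true (p : ℝ≥0∞) : nu p {x | x = true} = min p 1 := by
  rw [show {x | x = true} = ({true} : Set Bool) by ext x; simp,
    nu, PMF.toMeasure_apply_singleton _ _ (measurableSet_singleton _)]
  show (((min p 1).toNNReal : NNReal) : ℝ≥0∞) = min p 1
  exact ENNReal.coe_toNNReal (by simp)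

lemma nu_false (p : ℝ≥0∞) : nu p {x | x = false} = 1 - min p 1 := by
  rw [show {x | x = false} = ({false} : Set Bool) by ext x; simp,
    nu, PMF.toMeasure_apply_singleton _ _ (measurableSet_singleton _)]
  show (((1 - (min p 1).toNNReal : NNReal)) : ℝ≥0∞) = 1 - min p 1
  rw [ENNReal.coe_sub, ENNReal.coe_one, ENNReal.coe_toNNReal (by simp)]

lemma measSet {n : ℕ} (s : Set (Sym2 (Fin n) → Bool)) : MeasurableSet s :=
  s.to_countable.measurableSet

variable {n : ℕ}

def Bad (v w : Fin n) : Set (Sym2 (Fin n) → Bool) :=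
  {ω | ω s(v,w) = true ∧
    ∀ u : Fin n, u ≠ v → u ≠ w → ω s(v,u) = true → ω s(w,u) = true}

def UU (v w : Fin n) : Finset (Fin n) := Finset.univ \ {v, w}

open Classical in
noncomputable def F (v w : Fin n) (T : Finset (Fin n)) (i : Sym2 (Fin n)) : Set Bool :=
  if i = s(v,w) then {x | x = true}
  else if ∃ u ∈ T, i = s(v,u) ∨ i = s(w,u) then {x | x = true}
  else if ∃ u, u ∉ T ∧ u ≠ v ∧ u ≠ w ∧ i = s(v,u) then {x | x = false}
  else Set.univ

lemma bad_subset (v w : Fin n) :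
    Bad v w ⊆ ⋃ T ∈ (UU v w).powerset, Set.univ.pi (F v w T) := by
  intro ω hω
  classical
  refine Set.mem_biUnion (x := (UU v w).filter (fun u => ω s(v,u) = true))
    (Finset.mem_powerset.mpr (Finset.filter_subset _ _)) ?_
  · intro i _
    unfold F
    split_ifs with h1 h2 h3
    · subst h1; exact hω.1
    · obtain ⟨u, huT, hi⟩ := h2
      simp only [Finset.mem_filter, UU, Finset.mem_sdiff, Finset.mem_univ, true_and,
        Finset.mem_insert, Finset.mem_singleton, not_or] at huT
      rcases hi with hi | hi
      · subst hi; exact huT.2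
      · subst hi; exact hω.2 u huT.1.1 huT.1.2 huT.2
    · obtain ⟨u, huT, huv, huw, hi⟩ := h3
      subst hi
      simp only [Finset.mem_filter, UU, Finset.mem_sdiff, Finset.mem_univ, true_and,
        Finset.mem_insert, Finset.mem_singleton, not_or, huv, huw, not_false_iff,
        and_true, true_and, not_and] at huT
      simp only [Set.mem_setOf_eq]
      exact Bool.not_eq_true _ ▸ (by simpa using huT)
    · trivial


variable (p : ℝ≥0∞)

lemma F_vw (v w : Fin n) (T : Finset (Fin n)) : F v w T s(v,w) = {x | x = true} := by
  unfold F; rw [if_pos rfl]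

lemma F_vu (v w : Fin n) (T : Finset (Fin n)) (hT : T ⊆ UU v w) {u : Fin n} (hu : u ∈ T) :
    F v w T s(v,u) = {x | x = true} := by
  have huU := hT hu
  simp only [UU, Finset.mem_sdiff, Finset.mem_univ, true_and, Finset.mem_insert,
    Finset.mem_singleton, not_or] at huU
  unfold F
  rw [if_neg, if_pos ⟨u, hu, Or.inl rfl⟩]
  rw [Sym2.eq_iff]
  rintro (⟨-, h⟩ | ⟨-, h⟩)
  · exact huU.2 h
  · exact huU.1 h

lemma F_wu (v w : Fin n) (T : Finset (Fin n)) (hT : T ⊆ UU v w) {u : Fin n} (hu : u ∈ T) :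
    F v w T s(w,u) = {x | x = true} := by
  have huU := hT hu
  simp only [UU, Finset.mem_sdiff, Finset.mem_univ, true_and, Finset.mem_insert,
    Finset.mem_singleton, not_or] at huU
  unfold F
  rw [if_neg, if_pos ⟨u, hu, Or.inr rfl⟩]
  rw [Sym2.eq_iff]
  rintro (⟨-, h⟩ | ⟨-, h⟩)
  · exact huU.2 h
  · exact huU.1 h

lemma F_out (v w : Fin n) (hvw : v ≠ w) (T : Finset (Fin n)) (hT : T ⊆ UU v w)
    {u : Fin n} (huU : u ∈ UU v w) (hu : u ∉ T) :
    F v w T s(v,u) = {x | x = false} := by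
  simp only [UU, Finset.mem_sdiff, Finset.mem_univ, true_and, Finset.mem_insert,
    Finset.mem_singleton, not_or] at huU
  unfold F
  rw [if_neg, if_neg, if_pos ⟨u, hu, huU.1, huU.2, rfl⟩]
  · rintro ⟨u', hu'T, (h | h)⟩ <;> rw [Sym2.eq_iff] at h
    · have hu'U := hT hu'T
      simp only [UU, Finset.mem_sdiff, Finset.mem_univ, true_and, Finset.mem_insert,
        Finset.mem_singleton, not_or] at hu'U
      rcases h with ⟨-, h⟩ | ⟨h, -⟩
      · exact hu (h ▸ hu'T)
      · exact hu'U.1 h.symm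
    · have hu'U := hT hu'T
      simp only [UU, Finset.mem_sdiff, Finset.mem_univ, true_and, Finset.mem_insert,
        Finset.mem_singleton, not_or] at hu'U
      rcases h with ⟨h, -⟩ | ⟨h, -⟩
      · exact hvw h
      · exact hu'U.1 h.symm
  · rw [Sym2.eq_iff]
    rintro (⟨-, h⟩ | ⟨-, h⟩)
    · exact huU.2 h
    · exact huU.1 h


lemma mem_UU {v w u : Fin n} (h : u ∈ UU v w) : u ≠ v ∧ u ≠ w := by
  simpa [UU, not_or] using h

lemma pi_F_measure (v w : Fin n) (hvw : v ≠ w) (T : Finset (Fin n)) (hT : T ⊆ UU v w) :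
    erMeasure n p (Set.univ.pi (F v w T)) =
      min p 1 * ((min p 1 * min p 1) ^ T.card * (1 - min p 1) ^ (UU v w \ T).card) := by
  classical
  rw [erMeasure_eq, Measure.pi_pi]
  set A : Finset (Sym2 (Fin n)) :=
    {s(v,w)} ∪ ((T.image fun u => s(v,u)) ∪ ((T.image fun u => s(w,u)) ∪
      ((UU v w \ T).image fun u => s(v,u)))) with hA
  have hoff : ∀ i ∈ Finset.univ, i ∉ A → nu p (F v w T i) = 1 := by
    intro i _ hi
    have : F v w T i = Set.univ := by
      unfold F
      split_ifs with h1 h2 h3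
      · exact absurd (by
          simp only [hA, Finset.mem_union, Finset.mem_singleton]
          exact Or.inl h1) hi
      · obtain ⟨u, huT, h | h⟩ := h2
        · exact absurd (by
            simp only [hA, Finset.mem_union, Finset.mem_singleton, Finset.mem_image]
            exact Or.inr (Or.inl ⟨u, huT, h.symm⟩)) hi
        · exact absurd (by
            simp only [hA, Finset.mem_union, Finset.mem_singleton, Finset.mem_image]
            exact Or.inr (Or.inr (Or.inl ⟨u, huT, h.symm⟩))) hi
      · obtain ⟨u, huT, huv, huw, h⟩ := h3
        refine absurd (?_ : i ∈ A) hi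
        simp only [hA, Finset.mem_union, Finset.mem_singleton, Finset.mem_image]
        refine Or.inr (Or.inr (Or.inr ⟨u, ?_, h.symm⟩))
        simp [UU, Finset.mem_sdiff, huv, huw, huT]
      · rfl
    rw [this]; exact measure_univ
  rw [← Finset.prod_subset (Finset.subset_univ A) hoff]
  have hinj : ∀ (a : Fin n) (s : Finset (Fin n)),
      ∀ x ∈ s, ∀ y ∈ s, s(a,x) = s(a,y) → x = y := by
    intro a s x _ y _ h
    exact Sym2.congr_right.mp h
  have d3 : Disjoint (T.image fun u => s(w,u)) ((UU v w \ T).image fun u => s(v,u)) := by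
    simp only [Finset.disjoint_left, Finset.mem_image]
    rintro i ⟨u, huT, rfl⟩ ⟨u', hu', heq⟩
    obtain ⟨hu'v, hu'w⟩ := mem_UU (Finset.mem_sdiff.mp hu').1
    rw [Sym2.eq_iff] at heq
    rcases heq with ⟨h1, h2⟩ | ⟨h1, h2⟩
    · exact hvw h1
    · exact hu'w h2
  have d2 : Disjoint (T.image fun u => s(v,u))
      ((T.image fun u => s(w,u)) ∪ ((UU v w \ T).image fun u => s(v,u))) := by
    simp only [Finset.disjoint_left, Finset.mem_union, Finset.mem_image]
    rintro i ⟨u, huT, rfl⟩ (⟨u', hu'T, heq⟩ | ⟨u', hu', heq⟩)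
    · obtain ⟨hu'v, hu'w⟩ := mem_UU (hT hu'T)
      rw [Sym2.eq_iff] at heq
      rcases heq with ⟨h1, h2⟩ | ⟨h1, h2⟩
      · exact hvw h1.symm
      · exact hu'v h2
    · have hu'nT := (Finset.mem_sdiff.mp hu').2
      obtain ⟨huv, huw2⟩ := mem_UU (hT huT)
      rw [Sym2.eq_iff] at heq
      rcases heq with ⟨h1, h2⟩ | ⟨h1, h2⟩
      · exact hu'nT (by rw [h2]; exact huT)
      · exact huv h1.symm
  have d1 : Disjoint ({s(v,w)} : Finset (Sym2 (Fin n)))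
      ((T.image fun u => s(v,u)) ∪ ((T.image fun u => s(w,u)) ∪
        ((UU v w \ T).image fun u => s(v,u)))) := by
    simp only [Finset.disjoint_left, Finset.mem_union, Finset.mem_image, Finset.mem_singleton]
    rintro i rfl (⟨u, huT, heq⟩ | ⟨u, huT, heq⟩ | ⟨u, hu, heq⟩)
    · obtain ⟨huv, huw⟩ := mem_UU (hT huT)
      rw [Sym2.eq_iff] at heq
      rcases heq with ⟨h1, h2⟩ | ⟨h1, h2⟩
      · exact huw h2
      · exact hvw h1
    · obtain ⟨huv, huw⟩ := mem_UU (hT huT)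
      rw [Sym2.eq_iff] at heq
      rcases heq with ⟨h1, h2⟩ | ⟨h1, h2⟩
      · exact hvw h1.symm
      · exact huv h2
    · obtain ⟨huv, huw⟩ := mem_UU (Finset.mem_sdiff.mp hu).1
      rw [Sym2.eq_iff] at heq
      rcases heq with ⟨h1, h2⟩ | ⟨h1, h2⟩
      · exact huw h2
      · exact hvw h1
  have P1 : (∏ u ∈ T, nu p (F v w T s(v,u))) = (min p 1) ^ T.card := by
    rw [← Finset.prod_const]
    exact Finset.prod_congr rfl fun u hu => by rw [F_vu v w T hT hu, nu_true]
  have P2 : (∏ u ∈ T, nu p (F v w T s(w,u))) = (min p 1) ^ T.card := by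
    rw [← Finset.prod_const]
    exact Finset.prod_congr rfl fun u hu => by rw [F_wu v w T hT hu, nu_true]
  have P3 : (∏ u ∈ UU v w \ T, nu p (F v w T s(v,u))) = (1 - min p 1) ^ (UU v w \ T).card := by
    rw [← Finset.prod_const]
    exact Finset.prod_congr rfl fun u hu => by
      rw [F_out v w hvw T hT (Finset.mem_sdiff.mp hu).1 (Finset.mem_sdiff.mp hu).2, nu_false]
  rw [hA, Finset.prod_union d1, Finset.prod_union d2, Finset.prod_union d3,
    Finset.prod_singleton, F_vw, nu_true,
    Finset.prod_image (hinj v T), Finset.prod_image (hinj w T),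
    Finset.prod_image (hinj v (UU v w \ T)), P1, P2, P3, mul_pow]
  ring


lemma card_UU (v w : Fin n) (hvw : v ≠ w) : (UU v w).card = n - 2 := by
  rw [UU, Finset.card_sdiff_of_subset (Finset.subset_univ _), Finset.card_univ, Fintype.card_fin,
    Finset.card_pair hvw]

lemma bad_bound (v w : Fin n) (hvw : v ≠ w) :
    erMeasure n p (Bad v w) ≤
      min p 1 * (min p 1 * min p 1 + (1 - min p 1)) ^ (n - 2) := by
  classical
  calc erMeasure n p (Bad v w)
      ≤ erMeasure n p (⋃ T ∈ (UU v w).powerset, Set.univ.pi (F v w T)) :=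
        measure_mono (bad_subset v w)
    _ ≤ ∑ T ∈ (UU v w).powerset, erMeasure n p (Set.univ.pi (F v w T)) :=
        measure_biUnion_finset_le _ _
    _ = ∑ T ∈ (UU v w).powerset,
          min p 1 * ((min p 1 * min p 1) ^ T.card * (1 - min p 1) ^ (UU v w \ T).card) :=
        Finset.sum_congr rfl fun T hT => pi_F_measure p v w hvw T (Finset.mem_powerset.mp hT)
    _ = min p 1 * ∑ T ∈ (UU v w).powerset,
          (∏ _u ∈ T, (min p 1 * min p 1)) * ∏ _u ∈ UU v w \ T, (1 - min p 1) := by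
        rw [Finset.mul_sum]
        exact Finset.sum_congr rfl fun T _ => by rw [Finset.prod_const, Finset.prod_const]
    _ = min p 1 * ∏ _u ∈ UU v w, (min p 1 * min p 1 + (1 - min p 1)) := by
        rw [Finset.prod_add]
    _ = min p 1 * (min p 1 * min p 1 + (1 - min p 1)) ^ (UU v w).card := by
        rw [Finset.prod_const]
    _ = _ := by rw [card_UU v w hvw]

lemma global_bound (n : ℕ) (p : ℝ≥0∞) :
    erMeasure n p
      ({ω | ∀ v w : Fin n, w ∈ ball1 n ω v →
        (∀ u ∈ ball1 n ω v, u ≠ w → (graphOf n ω).Adj w u) → w = v}ᶜ)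
      ≤ (n : ℝ≥0∞) * n * (min p 1 * (min p 1 * min p 1 + (1 - min p 1)) ^ (n - 2)) := by
  classical
  have hsub : ({ω | ∀ v w : Fin n, w ∈ ball1 n ω v →
      (∀ u ∈ ball1 n ω v, u ≠ w → (graphOf n ω).Adj w u) → w = v}ᶜ :
        Set (Sym2 (Fin n) → Bool))
      ⊆ ⋃ x ∈ (Finset.univ : Finset (Fin n)).offDiag, Bad x.1 x.2 := by
    intro ω hω
    simp only [Set.mem_compl_iff, Set.mem_setOf_eq, not_forall] at hω
    obtain ⟨v, w, hball, hadj, hwv⟩ := hω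
    have hvw : (graphOf n ω).Adj v w := by
      rcases hball with h | h
      · exact absurd h hwv
      · exact h
    refine Set.mem_biUnion (show ((v, w) : Fin n × Fin n) ∈ (Finset.univ : Finset (Fin n)).offDiag
      from Finset.mem_offDiag.mpr ⟨Finset.mem_univ _, Finset.mem_univ _,
        fun h => hwv h.symm⟩) ?_
    refine ⟨hvw.2, fun u huv huw hvu => ?_⟩
    have : u ∈ ball1 n ω v := Or.inr ⟨Ne.symm huv, hvu⟩
    exact (hadj u this huw).2
  calc erMeasure n p _
      ≤ erMeasure n p (⋃ x ∈ (Finset.univ : Finset (Fin n)).offDiag, Bad x.1 x.2) :=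
        measure_mono hsub
    _ ≤ ∑ x ∈ (Finset.univ : Finset (Fin n)).offDiag, erMeasure n p (Bad x.1 x.2) :=
        measure_biUnion_finset_le _ _
    _ ≤ ((Finset.univ : Finset (Fin n)).offDiag.card : ℝ≥0∞) *
          (min p 1 * (min p 1 * min p 1 + (1 - min p 1)) ^ (n - 2)) :=
        (Finset.sum_le_card_nsmul _ _ _ fun x hx =>
          bad_bound p x.1 x.2 (Finset.mem_offDiag.mp hx).2.2).trans_eq (by rw [nsmul_eq_mul])
    _ ≤ _ := by
        refine mul_le_mul_left ?_ _
        have hcard : (Finset.univ : Finset (Fin n)).offDiag.card ≤ n * n := by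
          rw [Finset.offDiag_card, Finset.card_univ, Fintype.card_fin]
          omega
        calc ((Finset.univ : Finset (Fin n)).offDiag.card : ℝ≥0∞)
            ≤ ((n * n : ℕ) : ℝ≥0∞) := Nat.cast_le.mpr hcard
          _ = (n : ℝ≥0∞) * n := by push_cast; ring


open Filter in
lemma aux_tendsto (α : ℝ) (hα0 : 0 < α) (hα1 : α < 1) :
    Tendsto (fun n : ℕ => (n:ℝ) * n *
      Real.exp (-(((n - 2 : ℕ) : ℝ) * ((n:ℝ) ^ (-α) * (1 - (n:ℝ) ^ (-α)))))) atTop (nhds 0) := by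
  have hc : (0:ℝ) < 1 - α := by linarith
  set k : ℕ := ⌈3 / (1 - α)⌉₊ with hk
  have hk3 : (3:ℝ) ≤ (k : ℝ) * (1 - α) := by
    have h := Nat.le_ceil (3 / (1 - α))
    calc (3:ℝ) = 3 / (1-α) * (1-α) := by field_simp
      _ ≤ (k:ℝ) * (1-α) := mul_le_mul_of_nonneg_right h hc.le
  have hx : Tendsto (fun n : ℕ => (n:ℝ) ^ (1-α) / 4) atTop atTop :=
    ((tendsto_rpow_atTop hc).comp tendsto_natCast_atTop_atTop).atTop_div_const (by norm_num)
  have hmain : Tendsto (fun n : ℕ => ((n:ℝ)^(1-α)/4)^k * Real.exp (-((n:ℝ)^(1-α)/4)))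
      atTop (nhds 0) := (Real.tendsto_pow_mul_exp_neg_atTop_nhds_zero k).comp hx
  refine squeeze_zero' (Eventually.of_forall fun n => by positivity) ?_ hmain
  have h2 : Tendsto (fun n : ℕ => (n:ℝ) ^ α) atTop atTop :=
    (tendsto_rpow_atTop hα0).comp tendsto_natCast_atTop_atTop
  filter_upwards [eventually_ge_atTop (max 4 (4^k)), h2.eventually_ge_atTop 2] with n hn hn2
  have hn4 : (4:ℕ) ≤ n := le_trans (le_max_left _ _) hn
  have hN4 : (4:ℝ) ≤ (n:ℝ) := by exact_mod_cast hn4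
  have hN0 : (0:ℝ) < n := by linarith
  have hN1 : (1:ℝ) ≤ n := by linarith
  set r : ℝ := (n:ℝ) ^ (-α) with hrdef
  have hr0 : 0 ≤ r := Real.rpow_nonneg hN0.le _
  have hrhalf : r ≤ 1/2 := by
    rw [hrdef, Real.rpow_neg hN0.le, show (1:ℝ)/2 = 2⁻¹ by norm_num]
    exact inv_anti₀ (by norm_num) hn2
  have hcast : ((n - 2 : ℕ) : ℝ) = (n:ℝ) - 2 := by
    rw [Nat.cast_sub (by omega)]; norm_num
  have hA : (n:ℝ)^(1-α)/4 ≤ ((n - 2 : ℕ) : ℝ) * (r * (1 - r)) := by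
    have h1 : (n:ℝ)/2 ≤ ((n-2:ℕ):ℝ) := by rw [hcast]; linarith
    have h2' : r * (1/2) ≤ r * (1 - r) := by
      apply mul_le_mul_of_nonneg_left _ hr0; linarith
    have h3 : (n:ℝ)^(1-α) = (n:ℝ) * r := by
      rw [hrdef, show (1:ℝ) - α = 1 + (-α) by ring, Real.rpow_add hN0, Real.rpow_one]
    calc (n:ℝ)^(1-α)/4 = (n:ℝ)/2 * (r * (1/2)) := by rw [h3]; ring
      _ ≤ ((n-2:ℕ):ℝ) * (r * (1/2)) := by
          apply mul_le_mul_of_nonneg_right h1; positivity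
      _ ≤ ((n-2:ℕ):ℝ) * (r * (1-r)) := by
          apply mul_le_mul_of_nonneg_left h2'; positivity
  have hB : (n:ℝ) * n ≤ ((n:ℝ)^(1-α)/4)^k := by
    have h4k : ((4:ℝ))^k ≤ (n:ℝ) := by
      have h' : (4^k : ℕ) ≤ n := le_trans (le_max_right _ _) hn
      exact_mod_cast h'
    have hpow : ((n:ℝ)^(1-α))^k = (n:ℝ)^((1-α) * (k:ℝ)) := by
      rw [← Real.rpow_natCast ((n:ℝ)^(1-α)) k, ← Real.rpow_mul hN0.le]
    have h7 : (n:ℝ)^(3:ℕ) ≤ (n:ℝ)^((1-α)*(k:ℝ)) := by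
      rw [← Real.rpow_natCast (n:ℝ) 3]
      exact Real.rpow_le_rpow_of_exponent_le hN1 (by push_cast; linarith)
    have h4kpos : (0:ℝ) < 4^k := by positivity
    calc (n:ℝ) * n = (n:ℝ)*n*4^k / 4^k := by field_simp
      _ ≤ ((n:ℝ)*n*n) / 4^k := by gcongr
      _ = (n:ℝ)^(3:ℕ) / 4^k := by ring
      _ ≤ (n:ℝ)^((1-α)*(k:ℝ)) / 4^k := by gcongr
      _ = ((n:ℝ)^(1-α)/4)^k := by rw [div_pow, hpow]
  have hexp : Real.exp (-(((n-2:ℕ):ℝ) * (r * (1-r)))) ≤ Real.exp (-((n:ℝ)^(1-α)/4)) :=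
    Real.exp_le_exp.mpr (by linarith)
  exact mul_le_mul hB hexp (Real.exp_pos _).le (by positivity)

lemma real_bound (α : ℝ) (hα0 : 0 < α) (n : ℕ) (hn : 1 ≤ n) :
    ((n : ℝ≥0∞) * n * (min (ENNReal.ofReal ((n:ℝ)^(-α))) 1 *
      (min (ENNReal.ofReal ((n:ℝ)^(-α))) 1 * min (ENNReal.ofReal ((n:ℝ)^(-α))) 1 +
        (1 - min (ENNReal.ofReal ((n:ℝ)^(-α))) 1)) ^ (n - 2))).toReal
    ≤ (n:ℝ) * n * Real.exp (-(((n - 2 : ℕ) : ℝ) * ((n:ℝ)^(-α) * (1 - (n:ℝ)^(-α))))) := by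
  have hN1 : (1:ℝ) ≤ n := by exact_mod_cast hn
  have hN0 : (0:ℝ) < n := by linarith
  set r : ℝ := (n:ℝ)^(-α) with hrdef
  have hr0 : 0 ≤ r := Real.rpow_nonneg hN0.le _
  have hr1 : r ≤ 1 := Real.rpow_le_one_of_one_le_of_nonpos hN1 (by linarith)
  have hQ : min (ENNReal.ofReal r) 1 = ENNReal.ofReal r := min_eq_left (by
    rw [← ENNReal.ofReal_one]; exact ENNReal.ofReal_le_ofReal hr1)
  rw [hQ, ← ENNReal.ofReal_mul hr0, ← ENNReal.ofReal_one, ← ENNReal.ofReal_sub 1 hr0,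
    ← ENNReal.ofReal_add (by positivity) (by linarith),
    ENNReal.toReal_mul, ENNReal.toReal_mul, ENNReal.toReal_mul, ENNReal.toReal_pow,
    ENNReal.toReal_ofReal hr0, ENNReal.toReal_ofReal (by nlinarith),
    ENNReal.toReal_natCast]
  have hs0 : (0:ℝ) ≤ r*r + (1-r) := by nlinarith
  have hsle : r*r + (1-r) ≤ Real.exp (-(r*(1-r))) := by
    have h := Real.add_one_le_exp (-(r*(1-r)))
    nlinarith
  have hpow : (r*r + (1-r))^(n-2) ≤ Real.exp (-(((n-2:ℕ):ℝ) * (r*(1-r)))) := by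
    calc (r*r+(1-r))^(n-2) ≤ (Real.exp (-(r*(1-r))))^(n-2) := pow_le_pow_left₀ hs0 hsle _
      _ = Real.exp (-(((n-2:ℕ):ℝ) * (r*(1-r)))) := by rw [← Real.exp_nat_mul, mul_neg]
  have hmain : r * (r*r+(1-r))^(n-2) ≤ Real.exp (-(((n-2:ℕ):ℝ) * (r*(1-r)))) := by
    calc r * (r*r+(1-r))^(n-2) ≤ 1 * Real.exp (-(((n-2:ℕ):ℝ) * (r*(1-r)))) :=
          mul_le_mul hr1 hpow (by positivity) (by norm_num)
      _ = _ := one_mul _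
  exact mul_le_mul_of_nonneg_left hmain (by positivity)

lemma bound_ne_top (n : ℕ) (p : ℝ≥0∞) :
    (n : ℝ≥0∞) * n * (min p 1 * (min p 1 * min p 1 + (1 - min p 1)) ^ (n - 2)) ≠ ⊤ := by
  have hq1 : min p 1 ≤ 1 := min_le_right _ _
  have hs1 : min p 1 * min p 1 + (1 - min p 1) ≤ 1 := by
    calc min p 1 * min p 1 + (1 - min p 1) ≤ 1 * min p 1 + (1 - min p 1) := by gcongr
      _ = min p 1 + (1 - min p 1) := by rw [one_mul]
      _ = 1 := add_tsub_cancel_of_le hq1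
  have h : min p 1 * (min p 1 * min p 1 + (1 - min p 1)) ^ (n - 2) ≤ 1 := by
    calc min p 1 * (min p 1 * min p 1 + (1 - min p 1)) ^ (n - 2)
        ≤ 1 * 1 ^ (n - 2) := by gcongr
      _ = 1 := by simp
  exact ne_top_of_le_ne_top (by simp [ENNReal.mul_ne_top, ENNReal.natCast_ne_top])
    (mul_le_mul_right h _)

end FC

open Filter in
/-- In `G(n, n^{-α})` with `0 < α < 1`, with probability tending to `1` as `n → ∞`,
for every vertex `v`, the center `v` is the unique vertex of `N₁(v)` that is adjacent to
every other vertex of `N₁(v)`. -/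
theorem find_center_one_neighborhood (α : ℝ) (hα0 : 0 < α) (hα1 : α < 1) :
    Filter.Tendsto
      (fun n : ℕ =>
        (erMeasure n (ENNReal.ofReal ((n : ℝ) ^ (-α)))
          {ω | ∀ v w : Fin n, w ∈ ball1 n ω v →
            (∀ u ∈ ball1 n ω v, u ≠ w → (graphOf n ω).Adj w u) → w = v}).toReal)
      Filter.atTop (nhds 1) := by
  have key : Tendsto (fun n : ℕ =>
      (erMeasure n (ENNReal.ofReal ((n:ℝ)^(-α)))
        ({ω | ∀ v w : Fin n, w ∈ ball1 n ω v →
          (∀ u ∈ ball1 n ω v, u ≠ w → (graphOf n ω).Adj w u) → w = v}ᶜ)).toReal)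
      atTop (nhds 0) := by
    refine squeeze_zero' (Eventually.of_forall fun n => ENNReal.toReal_nonneg) ?_
      (FC.aux_tendsto α hα0 hα1)
    filter_upwards [eventually_ge_atTop 1] with n hn
    exact le_trans (ENNReal.toReal_mono (FC.bound_ne_top n _) (FC.global_bound n _))
      (FC.real_bound α hα0 n hn)
  have final := (tendsto_const_nhds (x := (1:ℝ)) (f := atTop)).sub key
  rw [sub_zero] at final
  refine final.congr fun n => ?_
  have hc : erMeasure n (ENNReal.ofReal ((n:ℝ)^(-α)))
      ({ω | ∀ v w : Fin n, w ∈ ball1 n ω v →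
        (∀ u ∈ ball1 n ω v, u ≠ w → (graphOf n ω).Adj w u) → w = v}ᶜ)
      = 1 - erMeasure n (ENNReal.ofReal ((n:ℝ)^(-α)))
        {ω | ∀ v w : Fin n, w ∈ ball1 n ω v →
          (∀ u ∈ ball1 n ω v, u ≠ w → (graphOf n ω).Adj w u) → w = v} :=
    prob_compl_eq_one_sub (FC.measSet _)
  rw [hc, ENNReal.toReal_sub_of_le prob_le_one ENNReal.one_ne_top, ENNReal.toReal_one]
  ring
end

section
/- Suppose for a random graph G on n labeled vertices, a deterministic reconstruction algorithm maps each possible collection of 1-neighborhoods to a graph. Suppose conditional on |E(G)| = m, G is uniform over all C(C(n,2), m) labeled graphs with m edges. If S is a set of neighborhood collections and S_E a set of edge counts, then the failure probability of the algorithm (failing to output a graph isomorphic to G) is at least P(|E| ∈ S_E) · min_{m ∈ S_E} (C(C(n,2),m) - n!·|S|)/C(C(n,2),m) - P(N₁(G) ∉ S). -/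
open MeasureTheory ProbabilityTheory
open scoped ENNReal

lemma map_equiv_eq' {n : ℕ} (H G : SimpleGraph (Fin n)) (φ : H ≃g G) :
    H.map φ.toEquiv.toEmbedding = G := by
  ext a b
  simp only [SimpleGraph.map_adj]
  constructor
  · rintro ⟨u, v, h, rfl, rfl⟩
    exact φ.map_adj_iff.mpr h
  · intro h
    exact ⟨φ.symm a, φ.symm b, by simpa using φ.symm.map_adj_iff.mpr h, by simp, by simp⟩

open scoped Classical in
lemma card_iso_le' {n : ℕ} (H : SimpleGraph (Fin n)) :
    ((Finset.univ : Finset (SimpleGraph (Fin n))).filter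
      (fun G => Nonempty (H ≃g G))).card ≤ n.factorial := by
  have hsub : ((Finset.univ : Finset (SimpleGraph (Fin n))).filter
      (fun G => Nonempty (H ≃g G))) ⊆
      Finset.univ.image (fun σ : Equiv.Perm (Fin n) => H.map σ.toEmbedding) := by
    intro G hG
    simp only [Finset.mem_filter] at hG
    obtain ⟨φ⟩ := hG.2
    exact Finset.mem_image.mpr ⟨φ.toEquiv, Finset.mem_univ _, map_equiv_eq' H G φ⟩
  calc _ ≤ _ := Finset.card_le_card hsub
    _ ≤ _ := Finset.card_image_le
    _ = n.factorial := by simp [Fintype.card_perm]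

lemma meas_coe_finset {X : Type*} [MeasurableSpace X]
    (hdisc : ∀ s : Set X, MeasurableSet s) (μ : Measure X) (t : Finset X) :
    μ ↑t = ∑ x ∈ t, μ {x} := by
  have h1 : (↑t : Set X) = ⋃ x ∈ t, ({x} : Set X) := by ext y; simp
  rw [h1, measure_biUnion_finset _ (fun x _ => hdisc _)]
  intro x _ y _ hxy
  simp [Function.onFun, Set.disjoint_singleton, hxy]


/-- Counting lower bound on the failure probability of any deterministic reconstruction
algorithm. Here `obs G` is the collection of (labeled-center) 1-neighborhoods of `G`,
valued in an abstract observation type `𝒪`; `A` is the algorithm, mapping each possible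
observation to a graph. Assuming that, conditional on the edge count `|E(G)| = m`, `G` is
uniform over all `C(C(n,2), m)` labeled graphs with `m` edges, the probability that the
algorithm fails to output a graph isomorphic to `G` is at least
`P(|E| ∈ S_E) · min_{m ∈ S_E} (C(C(n,2),m) - n!·|S|)/C(C(n,2),m) - P(obs G ∉ S)`. -/
theorem reconstruction_failure_lower_bound {n : ℕ} {𝒪 : Type*} [DecidableEq 𝒪]
    [MeasurableSpace (SimpleGraph (Fin n))]
    (hdisc : ∀ s : Set (SimpleGraph (Fin n)), MeasurableSet s)
    (μ : Measure (SimpleGraph (Fin n))) [IsProbabilityMeasure μ]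
    (obs : SimpleGraph (Fin n) → 𝒪) (A : 𝒪 → SimpleGraph (Fin n))
    (S : Finset 𝒪) (S_E : Finset ℕ) (hSE : S_E.Nonempty)
    (hunif : ∀ m : ℕ, μ {G | G.edgeSet.ncard = m} ≠ 0 →
      ∀ G₀ : SimpleGraph (Fin n), G₀.edgeSet.ncard = m →
        (μ[|{G | G.edgeSet.ncard = m}]) {G₀} = 1 / (Nat.choose (n.choose 2) m : ℝ≥0∞)) :
    (μ {G | ¬ Nonempty (A (obs G) ≃g G)}).toReal ≥
      (μ {G | G.edgeSet.ncard ∈ S_E}).toReal *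
          (S_E.inf' hSE fun m =>
            ((Nat.choose (n.choose 2) m : ℝ) - n.factorial * S.card) /
              (Nat.choose (n.choose 2) m : ℝ)) -
        (μ {G | obs G ∉ S}).toReal := by
  classical
  set C : ℕ → ℕ := fun m => Nat.choose (n.choose 2) m with hC
  set Em : ℕ → Set (SimpleGraph (Fin n)) := fun m => {G | G.edgeSet.ncard = m} with hEm
  set F : Set (SimpleGraph (Fin n)) := {G | ¬ Nonempty (A (obs G) ≃g G)} with hF
  set O : Set (SimpleGraph (Fin n)) := {G | obs G ∉ S} with hO
  set ES : Set (SimpleGraph (Fin n)) := {G | G.edgeSet.ncard ∈ S_E} with hES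
  set c : ℝ := S_E.inf' hSE fun m =>
      ((C m : ℝ) - n.factorial * S.card) / (C m : ℝ) with hc
  set TF : Finset (SimpleGraph (Fin n)) :=
    S.biUnion (fun s => Finset.univ.filter (fun G => Nonempty (A s ≃g G))) with hTF
  have hTFcard : (TF.card : ℝ) ≤ n.factorial * S.card := by
    have h1 : TF.card ≤ ∑ s ∈ S, ((Finset.univ : Finset (SimpleGraph (Fin n))).filter
        (fun G => Nonempty (A s ≃g G))).card := Finset.card_biUnion_le
    have h2 : ∑ s ∈ S, ((Finset.univ : Finset (SimpleGraph (Fin n))).filter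
        (fun G => Nonempty (A s ≃g G))).card ≤ ∑ _s ∈ S, n.factorial :=
      Finset.sum_le_sum fun s _ => by convert card_iso_le' (A s) using 2
    have h3 := h1.trans h2
    simp only [Finset.sum_const, smul_eq_mul] at h3
    calc (TF.card : ℝ) ≤ (S.card * n.factorial : ℕ) := by exact_mod_cast h3
      _ = n.factorial * S.card := by push_cast; ring
  have hfle1 : ∀ m ∈ S_E, ((C m : ℝ) - n.factorial * S.card) / (C m : ℝ) ≤ 1 := by
    intro m _
    rcases Nat.eq_zero_or_pos (C m) with h | h
    · simp [h]
    · rw [div_le_one (by positivity)]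
      have : (0:ℝ) ≤ n.factorial * S.card := by positivity
      linarith
  have hc1 : c ≤ 1 := by
    obtain ⟨m, hm⟩ := hSE
    exact le_trans (Finset.inf'_le _ hm) (hfle1 m hm)
  have hsingle : ∀ m : ℕ, μ (Em m) ≠ 0 → ∀ G₀ ∈ Em m,
      μ {G₀} = μ (Em m) * (1 / (C m : ℝ≥0∞)) := by
    intro m hμ G₀ hG₀
    have h := hunif m hμ G₀ hG₀
    rw [cond_apply (hdisc _)] at h
    have hcap : Em m ∩ {G₀} = {G₀} := by
      rw [Set.inter_eq_right]; simpa using hG₀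
    rw [hcap] at h
    have hμt : μ (Em m) ≠ ⊤ := measure_ne_top μ _
    calc μ {G₀} = μ (Em m) * ((μ (Em m))⁻¹ * μ {G₀}) := by
          rw [← mul_assoc, ENNReal.mul_inv_cancel hμ hμt, one_mul]
      _ = μ (Em m) * (1 / (C m : ℝ≥0∞)) := by rw [h]
  have hCpos : ∀ m : ℕ, μ (Em m) ≠ 0 → 1 ≤ C m := by
    intro m hμ
    by_contra h
    have hC0 : C m = 0 := by omega
    have hne : (Em m).Nonempty := by
      rw [Set.nonempty_iff_ne_empty]
      intro he
      exact hμ (by rw [he]; exact measure_empty)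
    obtain ⟨G₀, hG₀⟩ := hne
    have h1 := hsingle m hμ G₀ hG₀
    rw [hC0, Nat.cast_zero, one_div, ENNReal.inv_zero, ENNReal.mul_top hμ] at h1
    exact (measure_ne_top μ _) h1
  have hkey : ∀ m ∈ S_E,
      (μ ((↑TF : Set (SimpleGraph (Fin n))) ∩ Em m)).toReal ≤ (μ (Em m)).toReal * (1 - c) := by
    intro m hm
    rcases eq_or_ne (μ (Em m)) 0 with hμ | hμ
    · have h0 : μ ((↑TF : Set (SimpleGraph (Fin n))) ∩ Em m) = 0 :=
        measure_mono_null Set.inter_subset_right hμ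
      simp [h0, hμ]
    · have hC1 : (1:ℝ) ≤ C m := by exact_mod_cast hCpos m hμ
      have hCne : ((C m : ℝ≥0∞)) ≠ 0 := by
        have h := hCpos m hμ
        simp only [ne_eq, Nat.cast_eq_zero]
        omega
      set t : Finset (SimpleGraph (Fin n)) := TF.filter (fun G => G.edgeSet.ncard = m) with ht
      have hsub : ((↑TF : Set (SimpleGraph (Fin n))) ∩ Em m) ⊆ ↑t := by
        intro G hG
        simp only [ht, Finset.coe_filter, Set.mem_setOf_eq]
        exact ⟨hG.1, hG.2⟩
      have hmeas : μ ↑t = ∑ x ∈ t, μ {x} := meas_coe_finset hdisc μ t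
      have hsum : ∑ x ∈ t, μ {x} = t.card * (μ (Em m) * (1 / (C m : ℝ≥0∞))) := by
        rw [Finset.sum_congr rfl (fun x hx => hsingle m hμ x (by
          simp only [ht, Finset.mem_filter] at hx; exact hx.2))]
        simp [mul_comm]
      have hEmne : μ (Em m) ≠ ⊤ := measure_ne_top μ _
      have hle : (μ ((↑TF : Set (SimpleGraph (Fin n))) ∩ Em m)).toReal ≤
          (t.card : ℝ) * ((μ (Em m)).toReal * (1 / (C m : ℝ))) := by
        have h1 : μ ((↑TF : Set (SimpleGraph (Fin n))) ∩ Em m)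
            ≤ ↑t.card * (μ (Em m) * (1 / (C m : ℝ≥0∞))) := by
          rw [← hsum, ← hmeas]; exact measure_mono hsub
        have h2 := ENNReal.toReal_mono (by
          refine ENNReal.mul_ne_top (by simp) (ENNReal.mul_ne_top hEmne ?_)
          rw [one_div]
          exact ENNReal.inv_ne_top.mpr hCne) h1
        rw [ENNReal.toReal_mul, ENNReal.toReal_mul] at h2
        simpa using h2
      have htcard : (t.card : ℝ) ≤ n.factorial * S.card := by
        refine le_trans ?_ hTFcard
        exact_mod_cast Finset.card_le_card (Finset.filter_subset _ _)
      have hcle : c ≤ ((C m : ℝ) - n.factorial * S.card) / (C m : ℝ) := Finset.inf'_le _ hm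
      have hfrac : ((n.factorial : ℝ) * S.card) / (C m : ℝ) ≤ 1 - c := by
        have heq : ((C m : ℝ) - n.factorial * S.card) / (C m : ℝ)
            = 1 - ((n.factorial : ℝ) * S.card) / (C m : ℝ) := by
          field_simp
        rw [heq] at hcle
        linarith
      have hEmnn : (0:ℝ) ≤ (μ (Em m)).toReal := ENNReal.toReal_nonneg
      calc (μ ((↑TF : Set (SimpleGraph (Fin n))) ∩ Em m)).toReal
          ≤ (t.card : ℝ) * ((μ (Em m)).toReal * (1 / (C m : ℝ))) := hle
        _ = (μ (Em m)).toReal * ((t.card : ℝ) / (C m : ℝ)) := by ring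
        _ ≤ (μ (Em m)).toReal * (1 - c) := by
            apply mul_le_mul_of_nonneg_left _ hEmnn
            exact le_trans ((div_le_div_iff_of_pos_right (by linarith)).mpr htcard) hfrac
  -- decompose ES
  have hESunion : ES = ⋃ m ∈ S_E, Em m := by
    ext G; simp [hES, hEm]
  have hdisj : (↑S_E : Set ℕ).PairwiseDisjoint Em := by
    intro a _ b _ hab
    rw [Function.onFun, Set.disjoint_left]
    intro G hGa hGb
    exact hab (hGa.symm.trans hGb)
  have hμES : μ ES = ∑ m ∈ S_E, μ (Em m) := by
    rw [hESunion, measure_biUnion_finset hdisj (fun _ _ => hdisc _)]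
  have hTESeq : (↑TF : Set (SimpleGraph (Fin n))) ∩ ES
      = ⋃ m ∈ S_E, ((↑TF : Set (SimpleGraph (Fin n))) ∩ Em m) := by
    rw [hESunion]
    ext G; simp
  have hμTES : μ ((↑TF : Set (SimpleGraph (Fin n))) ∩ ES)
      = ∑ m ∈ S_E, μ ((↑TF : Set (SimpleGraph (Fin n))) ∩ Em m) := by
    rw [hTESeq, measure_biUnion_finset _ (fun _ _ => hdisc _)]
    exact hdisj.mono fun m => Set.inter_subset_right
  have hstepE : (μ ((↑TF : Set (SimpleGraph (Fin n))) ∩ ES)).toReal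
      ≤ (μ ES).toReal * (1 - c) := by
    rw [hμTES, ENNReal.toReal_sum (fun m _ => measure_ne_top μ _), hμES,
      ENNReal.toReal_sum (fun m _ => measure_ne_top μ _), Finset.sum_mul]
    exact Finset.sum_le_sum hkey
  -- covering
  have hcover : ES ⊆ F ∪ O ∪ ((↑TF : Set (SimpleGraph (Fin n))) ∩ ES) := by
    intro G hG
    by_cases hf : Nonempty (A (obs G) ≃g G)
    · by_cases ho : obs G ∈ S
      · refine Or.inr ⟨?_, hG⟩
        simp only [hTF, Finset.coe_biUnion, Set.mem_iUnion, Finset.coe_filter,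
          Set.mem_setOf_eq, Finset.mem_coe]
        exact ⟨obs G, ho, Finset.mem_univ _, hf⟩
      · exact Or.inl (Or.inr ho)
    · exact Or.inl (Or.inl hf)
  have hμcover : μ ES ≤ μ F + μ O + μ ((↑TF : Set (SimpleGraph (Fin n))) ∩ ES) :=
    le_trans (measure_mono hcover) (le_trans (measure_union_le _ _)
      (add_le_add_left (measure_union_le _ _) _))
  have hreal : (μ ES).toReal ≤ (μ F).toReal + (μ O).toReal
      + (μ ((↑TF : Set (SimpleGraph (Fin n))) ∩ ES)).toReal := by
    have h2 := ENNReal.toReal_mono (by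
      refine ENNReal.add_ne_top.mpr ⟨ENNReal.add_ne_top.mpr
        ⟨measure_ne_top μ _, measure_ne_top μ _⟩, measure_ne_top μ _⟩) hμcover
    rwa [ENNReal.toReal_add (ENNReal.add_ne_top.mpr ⟨measure_ne_top μ _, measure_ne_top μ _⟩)
      (measure_ne_top μ _), ENNReal.toReal_add (measure_ne_top μ _) (measure_ne_top μ _)] at h2
  have hring : (μ ES).toReal * (1 - c) = (μ ES).toReal - (μ ES).toReal * c := by ring
  linarith
end
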